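/- Dominance lemma: Let (H, R, B) be a correct subgraph branching rule for F-Subgraph Vertex Deletion, and suppose branch B ∈ B is dominated by branch B_d ∈ B (B_d ≠ B): there exist B^del ⊊ B and, writing H' = H − B^del, R' = R \ B^del, a nonempty R* ⊆ R' such that (1) H[R*] is not bumpy, (2) |R* ∩ B| ≥ |N_{H'}(R*) \ R*| ≥ 1, and (3) B_d ⊆ (B ∪ N_{H'}(R*)) \ R*. Then (H, R, B \ {B}) is a correct subgraph branching rule. -/

import Mathlib

/-- `G` restricted to the vertex set `A` contains some member of the family `F`
as a (not necessarily induced) subgraph. -/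
def ContainsCopyOn {ι : Type} {W : ι → Type} (F : ∀ i, SimpleGraph (W i))
    {V : Type} (G : SimpleGraph V) (A : Set V) : Prop :=
  ∃ i, ∃ f : W i → V, Function.Injective f ∧ (∀ w, f w ∈ A) ∧
    ∀ a b, (F i).Adj a b → G.Adj (f a) (f b)

/-- Correctness of the subgraph branching rule `(H, R, Bs)` for `F`-Subgraph
Vertex Deletion: whenever the rule applies to a (finite) graph `G` via an
induced embedding `φ` such that red vertices only have neighbors inside the
copy, and `S` is a solution for `G`, then there is a solution `S'` with
`|S'| ≤ |S|` containing `φ(B)` for some branch `B`. -/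
def RuleCorrect {ι : Type} {W : ι → Type} (F : ∀ i, SimpleGraph (W i))
    {VH : Type} (H : SimpleGraph VH) (R : Set VH) (Bs : Set (Set VH)) : Prop :=
  ∀ (V : Type) (_ : Fintype V) (G : SimpleGraph V) (φ : VH → V),
    Function.Injective φ →
    (∀ a b : VH, H.Adj a b ↔ G.Adj (φ a) (φ b)) →
    (∀ r ∈ R, ∀ u : V, G.Adj (φ r) u → u ∈ Set.range φ) →
    ∀ S : Set V, ¬ ContainsCopyOn F G Sᶜ →
      ∃ S' : Set V, ∃ B ∈ Bs,
        ¬ ContainsCopyOn F G S'ᶜ ∧ S'.ncard ≤ S.ncard ∧ φ '' B ⊆ S'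

/-- The neighborhood `N_{H'}(R*) \ R*` where `H' = H - Bdel`. -/
def NprimeSet {VH : Type} (H : SimpleGraph VH) (Bdel Rstar : Set VH) : Set VH :=
  {u | u ∉ Bdel ∧ u ∉ Rstar ∧ ∃ r ∈ Rstar, H.Adj u r}

theorem stmt12 {ι : Type} [Fintype ι] [Nonempty ι] {W : ι → Type} [∀ i, Fintype (W i)]
    (F : ∀ i, SimpleGraph (W i)) (hFconn : ∀ i, (F i).Connected)
    {VH : Type} [Fintype VH] (H : SimpleGraph VH) (hHconn : H.Connected)
    (hHbumpy : ContainsCopyOn F H Set.univ)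
    (R : Set VH) (Bs : Set (Set VH))
    (hcor : RuleCorrect F H R Bs)
    (B Bd : Set VH) (hB : B ∈ Bs) (hBd : Bd ∈ Bs) (hne : Bd ≠ B)
    (Bdel : Set VH) (hBdel : Bdel ⊂ B)
    (Rstar : Set VH) (hRsub : Rstar ⊆ R \ Bdel) (hRne : Rstar.Nonempty)
    (hRfree : ¬ ContainsCopyOn F H Rstar)
    (hcard1 : 1 ≤ (NprimeSet H Bdel Rstar).ncard)
    (hcard2 : (NprimeSet H Bdel Rstar).ncard ≤ (Rstar ∩ B).ncard)
    (hBdsub : Bd ⊆ (B ∪ NprimeSet H Bdel Rstar) \ Rstar) :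
    RuleCorrect F H R (Bs \ {B}) := by
  intro V _ G φ hinj hind hred S hS
  obtain ⟨S', B', hB', hS', hcard, hsub⟩ := hcor V ‹_› G φ hinj hind hred S hS
  by_cases hBB : B' = B
  · subst hBB
    set N' := NprimeSet H Bdel Rstar with hN'def
    set S'' : Set V := (S' \ φ '' (Rstar ∩ B')) ∪ φ '' N' with hS''def
    have hBdelB : Bdel ⊆ B' := hBdel.subset
    have hdisj : ∀ y ∈ Rstar, y ∉ Bdel := fun y hy => (hRsub hy).2
    -- S'' is a solution
    have hsol : ¬ ContainsCopyOn F G S''ᶜ := by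
      rintro ⟨i, f, finj, fmem, fadj⟩
      by_cases hex : ∃ w, f w ∈ φ '' Rstar
      · -- the copy lies entirely in φ '' Rstar
        obtain ⟨w₀, hw₀⟩ := hex
        have step : ∀ a b : W i, (F i).Adj a b → f a ∈ φ '' Rstar →
            f b ∈ φ '' Rstar := by
          rintro a b hab ⟨r, hr, hfa⟩
          have hG : G.Adj (φ r) (f b) := hfa ▸ fadj a b hab
          obtain ⟨x, hx⟩ := hred r (hRsub hr).1 (f b) hG
          have hHrx : H.Adj r x := (hind r x).mpr (by rw [hx]; exact hG)
          have hfb : f b ∉ S'' := fmem b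
          by_cases hxR : x ∈ Rstar
          · exact ⟨x, hxR, hx⟩
          · exfalso
            have hxB : x ∉ Bdel := by
              intro hxB
              apply hfb
              left
              refine ⟨by rw [← hx]; exact hsub ⟨x, hBdelB hxB, rfl⟩, ?_⟩
              rintro ⟨y, hy, hyx⟩
              have hyex : y = x := hinj (hyx.trans hx.symm)
              exact hdisj y hy.1 (hyex ▸ hxB)
            exact hfb (Or.inr ⟨x, ⟨hxB, hxR, r, hr, hHrx.symm⟩, hx⟩)
        have key : ∀ w, f w ∈ φ '' Rstar := by
          have walkstep : ∀ (a b : W i) (_ : (F i).Walk a b),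
              f a ∈ φ '' Rstar → f b ∈ φ '' Rstar := by
            intro a b p
            induction p with
            | nil => exact id
            | cons h _ ih => exact fun ha => ih (step _ _ h ha)
          intro w
          obtain ⟨p⟩ := (hFconn i).preconnected w₀ w
          exact walkstep _ _ p hw₀
        choose g hgR hgφ using key
        refine hRfree ⟨i, g, ?_, hgR, ?_⟩
        · intro a b hab
          exact finj ((hgφ a).symm.trans (by rw [hab, hgφ b]))
        · intro a b hab
          refine (hind _ _).mpr ?_
          rw [hgφ a, hgφ b]
          exact fadj a b hab
      · -- the copy avoids φ '' Rstar, hence avoids S'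
        push_neg at hex
        refine hS' ⟨i, f, finj, ?_, fadj⟩
        intro w hw
        have : f w ∈ S'' := Or.inl ⟨hw, fun hmem => hex w
          (Set.image_mono (f := φ) Set.inter_subset_left hmem)⟩
        exact fmem w this
    -- cardinality
    have h3 : φ '' (Rstar ∩ B') ⊆ S' := by
      rintro v ⟨x, hx, rfl⟩; exact hsub ⟨x, hx.2, rfl⟩
    have h1 : (φ '' (Rstar ∩ B')).ncard = (Rstar ∩ B').ncard :=
      Set.ncard_image_of_injective _ hinj
    have h2 : (φ '' N').ncard = N'.ncard := Set.ncard_image_of_injective _ hinj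
    have h4 : (S' \ φ '' (Rstar ∩ B')).ncard
        = S'.ncard - (φ '' (Rstar ∩ B')).ncard := Set.ncard_diff h3
    have h5 : S''.ncard ≤ (S' \ φ '' (Rstar ∩ B')).ncard + (φ '' N').ncard :=
      Set.ncard_union_le _ _
    have h6 : (φ '' (Rstar ∩ B')).ncard ≤ S'.ncard := Set.ncard_le_ncard h3
    have hcard' : S''.ncard ≤ S.ncard := by omega
    -- φ '' Bd ⊆ S''
    have hBdS : φ '' Bd ⊆ S'' := by
      rintro v ⟨b, hb, rfl⟩
      obtain ⟨hbU, hbR⟩ := hBdsub hb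
      rcases hbU with hbB | hbN
      · left
        refine ⟨hsub ⟨b, hbB, rfl⟩, ?_⟩
        rintro ⟨y, hy, hyb⟩
        exact hbR ((hinj hyb) ▸ hy.1)
      · exact Or.inr ⟨b, hbN, rfl⟩
    exact ⟨S'', Bd, ⟨hBd, fun h => hne h⟩, hsol, hcard', hBdS⟩
  · exact ⟨S', B', ⟨hB', fun h => hBB h⟩, hS', hcard, hsub⟩
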